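/- For every integer n ≥ 1, the polynomial F(x) = (1/2)·∑_{j=0}^{n} (−1)^j · ∏_{k=0, k≠j}^{2n} (x−k)/(j−k) + (1/2)·∑_{j=n+1}^{2n} (−1)^{j+1} · ∏_{k=0, k≠j}^{2n} (x−k)/(j−k) satisfies F(x+1) + F(x) = [x choose n]·[x−n−1 choose n] as an identity of polynomials. -/

import Mathlib

/-- The polynomial `[x choose k] = x(x−1)⋯(x−k+1)/k!`. -/
noncomputable def binomPoly (k : ℕ) : Polynomial ℚ :=
  Polynomial.C ((k.factorial : ℚ))⁻¹ *
    ∏ i ∈ Finset.range k, (Polynomial.X - Polynomial.C (i : ℚ))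

open Polynomial Finset

lemma prod_sub_range (n : ℕ) : ∏ i ∈ Finset.range n, ((n:ℚ) - i) = n.factorial := by
  rw [← Finset.prod_range_reflect]
  have h : ∀ i ∈ Finset.range n, ((n:ℚ) - (n - 1 - i : ℕ)) = ((i+1 : ℕ) : ℚ) := by
    intro i hi
    rw [Finset.mem_range] at hi
    have h1 : n - 1 - i = n - (i+1) := by omega
    rw [h1, Nat.cast_sub (by omega)]
    push_cast; ring
  rw [Finset.prod_congr rfl h, ← Nat.cast_prod, Finset.prod_range_add_one_eq_factorial]

lemma eval_binom_self (n : ℕ) : (binomPoly n).eval (n:ℚ) = 1 := by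
  simp only [binomPoly, eval_mul, eval_C, eval_prod, eval_sub, eval_X]
  rw [prod_sub_range]
  field_simp

lemma eval_binom_nat_lt {j n : ℕ} (h : j < n) : (binomPoly n).eval (j:ℚ) = 0 := by
  simp only [binomPoly, eval_mul, eval_C, eval_prod, eval_sub, eval_X]
  rw [Finset.prod_eq_zero (Finset.mem_range.mpr h) (by simp)]
  ring

lemma eval_binom_neg_one (n : ℕ) : (binomPoly n).eval (-1 : ℚ) = (-1)^n := by
  simp only [binomPoly, eval_mul, eval_C, eval_prod, eval_sub, eval_X]
  have h : ∀ i ∈ Finset.range n, ((-1:ℚ) - i) = (-1) * ((i+1:ℕ):ℚ) := by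
    intro i _; push_cast; ring
  rw [Finset.prod_congr rfl h, Finset.prod_mul_distrib, Finset.prod_const, ← Nat.cast_prod,
    Finset.prod_range_add_one_eq_factorial]
  field_simp [mul_comm]
  rw [Finset.card_range]

noncomputable def rfun (n : ℕ) : ℕ → ℚ := fun j => (if j ≤ n then (-1:ℚ)^j else (-1)^(j+1)) / 2

lemma F_eq (n : ℕ) :
    Polynomial.C (1 / 2 : ℚ) *
          (∑ j ∈ Finset.range (n + 1), Polynomial.C ((-1 : ℚ) ^ j) *
            ∏ k ∈ (Finset.range (2 * n + 1)).erase j,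
              Polynomial.C (((j : ℚ) - (k : ℚ))⁻¹) * (Polynomial.X - Polynomial.C (k : ℚ))) +
        Polynomial.C (1 / 2 : ℚ) *
          (∑ j ∈ Finset.Icc (n + 1) (2 * n), Polynomial.C ((-1 : ℚ) ^ (j + 1)) *
            ∏ k ∈ (Finset.range (2 * n + 1)).erase j,
              Polynomial.C (((j : ℚ) - (k : ℚ))⁻¹) * (Polynomial.X - Polynomial.C (k : ℚ)))
      = Lagrange.interpolate (Finset.range (2*n+1)) (Nat.cast) (rfun n) := by
  rw [Lagrange.interpolate_apply]
  simp only [Finset.range_eq_Ico]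
  rw [← Finset.sum_Ico_consecutive (m := 0) (n := n+1) (k := 2*n+1) _ (by omega) (by omega)]
  rw [Finset.mul_sum, Finset.mul_sum]
  refine congrArg₂ (· + ·) ?_ ?_
  · simp only [← Finset.range_eq_Ico]  -- Ico 0 (n+1) vs range... careful: after rw range_eq_Ico all ranges changed
    apply Finset.sum_congr rfl
    intro j hj
    rw [Finset.mem_range] at hj
    rw [Lagrange.basis]
    simp only [Lagrange.basisDivisor, rfun, if_pos (by omega : j ≤ n)]
    rw [← mul_assoc, ← C_mul, one_div, inv_mul_eq_div]
  · rw [← Finset.Ico_add_one_right_eq_Icc]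
    apply Finset.sum_congr rfl
    intro j hj
    rw [Finset.mem_Ico] at hj
    rw [Lagrange.basis]
    simp only [Lagrange.basisDivisor, rfun, if_neg (by omega : ¬ j ≤ n)]
    rw [← mul_assoc, ← C_mul, one_div, inv_mul_eq_div]

lemma coeff_comp_X_add_one (p : Polynomial ℚ) (d : ℕ) (h : p.natDegree ≤ d) :
    (p.comp (X + C 1)).coeff d = p.coeff d := by
  conv_lhs => rw [p.as_sum_range' (d+1) (by omega)]
  rw [Polynomial.sum_comp, Polynomial.finset_sum_coeff]
  simp only [Polynomial.monomial_comp, Polynomial.coeff_C_mul, coeff_X_add_C_pow]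
  rw [Finset.sum_range_succ]
  have h0 : ∀ i ∈ Finset.range d, p.coeff i * ((1:ℚ)^(i-d) * (i.choose d : ℚ)) = 0 := by
    intro i hi
    rw [Finset.mem_range] at hi
    rw [Nat.choose_eq_zero_of_lt hi]
    simp
  rw [Finset.sum_congr rfl h0]
  simp

lemma erase_split (n j : ℕ) (hj : j ≤ 2*n) :
    (Finset.range (2*n+1)).erase j = Finset.range j ∪ Finset.Ico (j+1) (2*n+1) := by
  ext k
  simp only [Finset.mem_erase, Finset.mem_range, Finset.mem_union, Finset.mem_Ico]
  omega

lemma prod_erase_eq (n j : ℕ) (hj : j ≤ 2*n) :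
    ∏ k ∈ (Finset.range (2*n+1)).erase j, ((j:ℚ) - k)
      = (-1)^j * j.factorial * (2*n - j).factorial := by
  rw [erase_split n j hj, Finset.prod_union (by
    simp only [Finset.disjoint_left, Finset.mem_range, Finset.mem_Ico]; omega)]
  rw [prod_sub_range j]
  rw [Finset.prod_Ico_eq_prod_range]
  have h1 : ∀ i ∈ Finset.range (2*n+1 - (j+1)), ((j:ℚ) - (j+1+i : ℕ)) = (-1) * ((i+1:ℕ):ℚ) := by
    intro i _; push_cast; ring
  rw [Finset.prod_congr rfl h1, Finset.prod_mul_distrib, Finset.prod_const, ← Nat.cast_prod,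
    Finset.prod_range_add_one_eq_factorial]
  have h2 : 2*n+1 - (j+1) = 2*n - j := by omega
  rw [h2]
  have h3 : (-1:ℚ)^(2*n-j) = (-1)^j := by
    rcases Nat.even_or_odd j with he | ho
    · rw [Even.neg_one_pow he, Even.neg_one_pow (by rw [Nat.even_iff] at he ⊢; omega)]
    · rw [Odd.neg_one_pow ho, Odd.neg_one_pow (by rw [Nat.odd_iff] at ho ⊢; omega)]
  rw [Finset.card_range, h3]; ring

lemma injcast (m : ℕ) : Set.InjOn (Nat.cast : ℕ → ℚ) (Finset.range m) :=
  fun a _ b _ h => Nat.cast_injective h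

lemma coeffF (n : ℕ) :
    (Lagrange.interpolate (Finset.range (2*n+1)) (Nat.cast) (rfun n)).coeff (2*n)
      = (((n.factorial : ℚ)) * n.factorial)⁻¹ / 2 := by
  rw [Lagrange.interpolate_apply, Polynomial.finset_sum_coeff]
  simp only [Polynomial.coeff_C_mul]
  have hb : ∀ j ∈ Finset.range (2*n+1),
      rfun n j * (Lagrange.basis (Finset.range (2*n+1)) ((Nat.cast : ℕ → ℚ)) j).coeff (2*n)
      = (if j ≤ n then 1 else -1) * (((j.factorial : ℚ) * ((2*n-j).factorial : ℚ))⁻¹ / 2) := by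
    intro j hj
    have hj' : j ≤ 2*n := by rw [Finset.mem_range] at hj; omega
    have hd : (Lagrange.basis (Finset.range (2*n+1)) ((Nat.cast : ℕ → ℚ)) j).natDegree = 2*n := by
      rw [Lagrange.natDegree_basis (injcast _) hj, Finset.card_range]
      omega
    have hcn : (Lagrange.basis (Finset.range (2*n+1)) ((Nat.cast : ℕ → ℚ)) j).coeff (2*n)
        = (Lagrange.basis (Finset.range (2*n+1)) ((Nat.cast : ℕ → ℚ)) j).leadingCoeff := by
      rw [Polynomial.leadingCoeff, hd]
    rw [hcn, Lagrange.basis, Polynomial.leadingCoeff_prod]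
    have hlc : ∀ k ∈ (Finset.range (2*n+1)).erase j,
        (Lagrange.basisDivisor ((j:ℕ):ℚ) ((k:ℕ):ℚ)).leadingCoeff = ((j:ℚ) - k)⁻¹ := by
      intro k _
      rw [Lagrange.basisDivisor, Polynomial.leadingCoeff_mul, Polynomial.leadingCoeff_C,
        (Polynomial.monic_X_sub_C _).leadingCoeff, mul_one]
    rw [Finset.prod_congr rfl hlc, Finset.prod_inv_distrib, prod_erase_eq n j hj']
    rw [rfun]
    have hf : ((j.factorial : ℚ)) ≠ 0 := Nat.cast_ne_zero.mpr (Nat.factorial_ne_zero _)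
    have hf2 : (((2*n-j).factorial : ℚ)) ≠ 0 := Nat.cast_ne_zero.mpr (Nat.factorial_ne_zero _)
    rcases Nat.even_or_odd j with he | ho
    · rw [Even.neg_one_pow he]
      by_cases h : j ≤ n <;> simp [h] <;> field_simp <;> ring <;> simp [he.neg_one_pow]
    · rw [Odd.neg_one_pow ho]
      by_cases h : j ≤ n <;> simp [h] <;> field_simp <;> ring <;> simp [ho.neg_one_pow]
  rw [Finset.sum_congr rfl hb]
  rw [Finset.range_eq_Ico,
    ← Finset.sum_Ico_consecutive (m := 0) (n := n+1) (k := 2*n+1) _ (by omega) (by omega),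
    ← Finset.range_eq_Ico]
  have h1 : ∑ j ∈ Finset.range (n+1),
      (if j ≤ n then (1:ℚ) else -1) * (((j.factorial : ℚ) * ((2*n-j).factorial : ℚ))⁻¹ / 2)
      = ∑ j ∈ Finset.range (n+1), (((j.factorial : ℚ) * ((2*n-j).factorial : ℚ))⁻¹ / 2) := by
    apply Finset.sum_congr rfl
    intro j hj
    rw [Finset.mem_range] at hj
    rw [if_pos (by omega), one_mul]
  have h2 : ∑ j ∈ Finset.Ico (n+1) (2*n+1),
      (if j ≤ n then (1:ℚ) else -1) * (((j.factorial : ℚ) * ((2*n-j).factorial : ℚ))⁻¹ / 2)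
      = -∑ j ∈ Finset.range n, (((j.factorial : ℚ) * ((2*n-j).factorial : ℚ))⁻¹ / 2) := by
    rw [← Finset.sum_neg_distrib]
    apply Finset.sum_nbij' (fun j => 2*n - j) (fun m => 2*n - m)
    · intro a ha; rw [Finset.mem_Ico] at ha; rw [Finset.mem_range]; omega
    · intro a ha; rw [Finset.mem_range] at ha; rw [Finset.mem_Ico]; omega
    · intro a ha; rw [Finset.mem_Ico] at ha; omega
    · intro a ha; rw [Finset.mem_range] at ha; omega
    · intro a ha
      rw [Finset.mem_Ico] at ha
      rw [if_neg (by omega)]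
      have e1 : 2*n - (2*n - a) = a := by omega
      rw [e1]
      ring_nf
  rw [h1, h2, Finset.sum_range_succ]
  have e2 : 2*n - n = n := by omega
  rw [e2]
  ring

lemma binom_eq_nodal (n : ℕ) : binomPoly n
    = C ((n.factorial : ℚ))⁻¹ * Lagrange.nodal (Finset.range n) (Nat.cast : ℕ → ℚ) := by
  rw [binomPoly, Lagrange.nodal]

lemma fact_inv_ne (n : ℕ) : ((n.factorial : ℚ))⁻¹ ≠ 0 :=
  inv_ne_zero (Nat.cast_ne_zero.mpr (Nat.factorial_ne_zero _))

lemma binom_natDegree (n : ℕ) : (binomPoly n).natDegree = n := by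
  rw [binom_eq_nodal, Polynomial.natDegree_C_mul (fact_inv_ne n), Lagrange.natDegree_nodal,
    Finset.card_range]

lemma binom_leadingCoeff (n : ℕ) : (binomPoly n).leadingCoeff = ((n.factorial : ℚ))⁻¹ := by
  rw [binom_eq_nodal, Polynomial.leadingCoeff_mul, Polynomial.leadingCoeff_C,
    (Lagrange.nodal_monic).leadingCoeff, mul_one]

lemma binom_ne_zero (n : ℕ) : binomPoly n ≠ 0 := by
  intro h
  have := binom_leadingCoeff n
  rw [h] at this
  exact fact_inv_ne n (by simpa using this.symm)

lemma comp_natDegree (n : ℕ) :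
    ((binomPoly n).comp (X - C ((n:ℚ) + 1))).natDegree = n := by
  rw [Polynomial.natDegree_comp, binom_natDegree, natDegree_X_sub_C, mul_one]

lemma comp_leadingCoeff (n : ℕ) :
    ((binomPoly n).comp (X - C ((n:ℚ) + 1))).leadingCoeff = ((n.factorial : ℚ))⁻¹ := by
  rw [Polynomial.leadingCoeff_comp (by rw [natDegree_X_sub_C]; omega), binom_leadingCoeff,
    (monic_X_sub_C _).leadingCoeff, one_pow, mul_one]

lemma Q_natDegree (n : ℕ) :
    (binomPoly n * (binomPoly n).comp (X - C ((n:ℚ) + 1))).natDegree = 2*n := by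
  rw [Polynomial.natDegree_mul (binom_ne_zero n) (by
      intro h
      have := comp_leadingCoeff n
      rw [h] at this
      exact fact_inv_ne n (by simpa using this.symm)),
    binom_natDegree, comp_natDegree]
  omega

lemma Q_coeff (n : ℕ) :
    (binomPoly n * (binomPoly n).comp (X - C ((n:ℚ) + 1))).coeff (2*n)
      = (((n.factorial : ℚ)) * n.factorial)⁻¹ := by
  have h := Polynomial.coeff_mul_degree_add_degree (binomPoly n)
    ((binomPoly n).comp (X - C ((n:ℚ) + 1)))
  rw [binom_natDegree, comp_natDegree, binom_leadingCoeff, comp_leadingCoeff] at h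
  rw [two_mul, h, mul_inv]

lemma Q_eval (n j : ℕ) (hj : j < 2*n) :
    (binomPoly n * (binomPoly n).comp (X - C ((n:ℚ) + 1))).eval (j:ℚ)
      = if j = n then (-1:ℚ)^n else 0 := by
  rw [eval_mul, eval_comp, eval_sub, eval_X, eval_C]
  rcases lt_trichotomy j n with h | h | h
  · rw [if_neg (by omega), eval_binom_nat_lt h, zero_mul]
  · subst h
    rw [if_pos rfl, eval_binom_self]
    have : (j:ℚ) - ((j:ℚ)+1) = -1 := by ring
    rw [this, eval_binom_neg_one, one_mul]
  · rw [if_neg (by omega)]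
    have hc : (j:ℚ) - ((n:ℚ)+1) = ((j - n - 1 : ℕ) : ℚ) := by
      rw [Nat.cast_sub (by omega : 1 ≤ j - n), Nat.cast_sub (by omega : n ≤ j)]
      push_cast; ring
    rw [hc, eval_binom_nat_lt (j := j - n - 1) (by omega), mul_zero]

lemma rsum (n j : ℕ) (hj : j < 2*n) :
    rfun n (j+1) + rfun n j = if j = n then (-1:ℚ)^n else 0 := by
  rcases lt_trichotomy j n with h | h | h
  · rw [if_neg (by omega), rfun, rfun, if_pos (by omega : j+1 ≤ n), if_pos (by omega : j ≤ n)]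
    rw [pow_succ]; ring
  · subst h
    rw [if_pos rfl, rfun, rfun, if_neg (by omega : ¬ j+1 ≤ j), if_pos le_rfl]
    rw [pow_add]; ring_nf
  · rw [if_neg (by omega), rfun, rfun, if_neg (by omega : ¬ j+1 ≤ n), if_neg (by omega : ¬ j ≤ n)]
    rw [pow_succ]; ring

/-- For `n ≥ 1`, the explicit polynomial
`F(x) = ½∑_{j=0}^{n}(−1)^j ∏_{k≠j}(x−k)/(j−k) + ½∑_{j=n+1}^{2n}(−1)^{j+1} ∏_{k≠j}(x−k)/(j−k)`
(products over `0 ≤ k ≤ 2n`) satisfies `F(x+1) + F(x) = [x choose n]·[x−n−1 choose n]`. -/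
theorem stmt14 : ∀ n : ℕ, 1 ≤ n → ∀ F : Polynomial ℚ,
    F = Polynomial.C (1 / 2 : ℚ) *
          (∑ j ∈ Finset.range (n + 1), Polynomial.C ((-1 : ℚ) ^ j) *
            ∏ k ∈ (Finset.range (2 * n + 1)).erase j,
              Polynomial.C (((j : ℚ) - (k : ℚ))⁻¹) * (Polynomial.X - Polynomial.C (k : ℚ))) +
        Polynomial.C (1 / 2 : ℚ) *
          (∑ j ∈ Finset.Icc (n + 1) (2 * n), Polynomial.C ((-1 : ℚ) ^ (j + 1)) *
            ∏ k ∈ (Finset.range (2 * n + 1)).erase j,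
              Polynomial.C (((j : ℚ) - (k : ℚ))⁻¹) * (Polynomial.X - Polynomial.C (k : ℚ))) →
    F.comp (Polynomial.X + 1) + F =
      binomPoly n * (binomPoly n).comp (Polynomial.X - Polynomial.C ((n : ℚ) + 1)) := by
  intro n hn F hF
  have hF' : F = Lagrange.interpolate (Finset.range (2*n+1)) (Nat.cast : ℕ → ℚ) (rfun n) :=
    hF.trans (F_eq n)
  rw [hF']
  set Fp := Lagrange.interpolate (Finset.range (2*n+1)) (Nat.cast : ℕ → ℚ) (rfun n) with hFp
  set Q := binomPoly n * (binomPoly n).comp (X - C ((n:ℚ) + 1)) with hQ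
  have hX1 : (X + (1 : Polynomial ℚ)) = X + C 1 := by rw [C_1]
  have hdegF : Fp.degree < (2*n+1 : ℕ) := by
    simpa [Finset.card_range, -Lagrange.interpolate_apply] using
      Lagrange.degree_interpolate_lt (r := rfun n) (injcast (2*n+1))
  have hndF : Fp.natDegree ≤ 2*n := by
    by_cases h0 : Fp = 0
    · simp [h0]
    · have := (Polynomial.natDegree_lt_iff_degree_lt h0).mpr hdegF; omega
  have hndComp : (Fp.comp (X + 1)).natDegree ≤ 2*n := by
    rw [hX1, Polynomial.natDegree_comp, natDegree_X_add_C, mul_one]; exact hndF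
  rw [← sub_eq_zero]
  apply Polynomial.eq_zero_of_degree_lt_of_eval_index_eq_zero (Finset.range (2*n))
    (injcast (2*n))
  · rw [Finset.card_range]
    rw [Polynomial.degree_lt_iff_coeff_zero]
    intro m hm
    rcases eq_or_lt_of_le hm with he | hlt
    · rw [Polynomial.coeff_sub, Polynomial.coeff_add, ← he]
      rw [hX1, coeff_comp_X_add_one Fp (2*n) hndF]
      rw [hFp, coeffF n, hQ, Q_coeff n]
      ring
    · rw [Polynomial.coeff_sub, Polynomial.coeff_add,
        Polynomial.coeff_eq_zero_of_natDegree_lt (lt_of_le_of_lt hndComp hlt),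
        Polynomial.coeff_eq_zero_of_natDegree_lt (lt_of_le_of_lt hndF hlt),
        Polynomial.coeff_eq_zero_of_natDegree_lt (by rw [hQ, Q_natDegree]; omega)]
      ring
  · intro j hj
    rw [Finset.mem_range] at hj
    rw [Polynomial.eval_sub, Polynomial.eval_add, Polynomial.eval_comp, Polynomial.eval_add,
      Polynomial.eval_X, Polynomial.eval_one]
    have hcast : (j:ℚ) + 1 = ((j+1 : ℕ) : ℚ) := by push_cast; ring
    rw [hcast, hFp,
      Lagrange.eval_interpolate_at_node (v := (Nat.cast : ℕ → ℚ)) (i := j+1) (rfun n)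
        (injcast _) (Finset.mem_range.mpr (by omega : j+1 < 2*n+1)),
      Lagrange.eval_interpolate_at_node (v := (Nat.cast : ℕ → ℚ)) (i := j) (rfun n)
        (injcast _) (Finset.mem_range.mpr (by omega : j < 2*n+1)),
      hQ, Q_eval n j hj, rsum n j hj]
    ring
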